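/- Let n ≥ 1 and let F be the free group on the 2n generators x_1, y_1, …, x_n, y_n (e.g. FreeGroup (Fin (2n))). Let r = [x_1,y_1]·[x_2,y_2]⋯[x_n,y_n] be the product of the commutators [x_i,y_i] = x_i y_i x_i^{-1} y_i^{-1} (the relator of the standard presentation of the fundamental group of the closed orientable surface of genus n). Then r lies in the commutator subgroup γ_2(F) = lowerCentralSeries F 1, and the image of r in the abelian quotient γ_2(F)/γ_3(F) (the quotient of lowerCentralSeries F 1 by the normal subgroup lowerCentralSeries F 2) is non-trivial and is not a proper power: there is no element g of γ_2(F)/γ_3(F) and no integer k ≥ 2 with [r] = g^k. In particular r ∉ γ_3(F). -/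

import Mathlib

open scoped commutatorElement

/-- Integral Heisenberg group. -/
@[ext] structure Heis where
  a : ℤ
  b : ℤ
  c : ℤ

namespace Heis

instance : Mul Heis := ⟨fun x y => ⟨x.a + y.a, x.b + y.b, x.c + y.c + x.a * y.b⟩⟩
instance : One Heis := ⟨⟨0, 0, 0⟩⟩
instance : Inv Heis := ⟨fun x => ⟨-x.a, -x.b, -x.c + x.a * x.b⟩⟩

@[simp] lemma mul_a (x y : Heis) : (x * y).a = x.a + y.a := rfl
@[simp] lemma mul_b (x y : Heis) : (x * y).b = x.b + y.b := rfl
@[simp] lemma mul_c (x y : Heis) : (x * y).c = x.c + y.c + x.a * y.b := rfl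
@[simp] lemma one_a : (1 : Heis).a = 0 := rfl
@[simp] lemma one_b : (1 : Heis).b = 0 := rfl
@[simp] lemma one_c : (1 : Heis).c = 0 := rfl
@[simp] lemma inv_a (x : Heis) : x⁻¹.a = -x.a := rfl
@[simp] lemma inv_b (x : Heis) : x⁻¹.b = -x.b := rfl
@[simp] lemma inv_c (x : Heis) : x⁻¹.c = -x.c + x.a * x.b := rfl

instance : Group Heis :=
  { mul := (· * ·), one := 1, inv := Inv.inv
    mul_assoc := by intro x y z; ext <;> simp <;> ring
    one_mul := by intro x; ext <;> simp
    mul_one := by intro x; ext <;> simp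
    inv_mul_cancel := by intro x; ext <;> simp <;> ring }

/-- Projection to the abelianization coordinates. -/
def π : Heis →* Multiplicative ℤ × Multiplicative ℤ where
  toFun x := (Multiplicative.ofAdd x.a, Multiplicative.ofAdd x.b)
  map_one' := rfl
  map_mul' x y := rfl

lemma gamma2_le_ker : (⊤ : Subgroup Heis).lowerCentralSeries 1 ≤ π.ker := by
  rw [Subgroup.top_lowerCentralSeries_one, commutator_def, Subgroup.commutator_le]
  intro g _ h _
  rw [MonoidHom.mem_ker]
  have : π g * π h = π h * π g := mul_comm _ _
  simp [commutatorElement_def, map_mul, map_inv, this, mul_assoc]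

lemma ab_eq_zero {x : Heis} (hx : x ∈ (⊤ : Subgroup Heis).lowerCentralSeries 1) :
    x.a = 0 ∧ x.b = 0 := by
  have := gamma2_le_ker hx
  rw [MonoidHom.mem_ker, Prod.ext_iff] at this
  exact ⟨congrArg Multiplicative.toAdd this.1, congrArg Multiplicative.toAdd this.2⟩

lemma gamma2_le_center : (⊤ : Subgroup Heis).lowerCentralSeries 1 ≤ Subgroup.center Heis := by
  intro x hx
  obtain ⟨ha, hb⟩ := ab_eq_zero hx
  rw [Subgroup.mem_center_iff]
  intro y
  ext <;> simp [ha, hb, add_comm]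

lemma gamma3_eq_bot : (⊤ : Subgroup Heis).lowerCentralSeries 2 = ⊥ :=
  Subgroup.lowerCentralSeries_succ_eq_bot _ gamma2_le_center

end Heis

namespace SurfaceAux

variable (n : ℕ)

/-- The generator assignment sending `x₁ ↦ X`, `y₁ ↦ Y`, all others to `1`. -/
def f : Fin n ⊕ Fin n → Heis
  | .inl i => if i.val = 0 then ⟨1, 0, 0⟩ else 1
  | .inr i => if i.val = 0 then ⟨0, 1, 0⟩ else 1

/-- The evaluation homomorphism into the Heisenberg group. -/
def φ : FreeGroup (Fin n ⊕ Fin n) →* Heis := FreeGroup.lift (f n)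

lemma φ_mem {x : FreeGroup (Fin n ⊕ Fin n)} (m : ℕ)
    (hx : x ∈ (⊤ : Subgroup (FreeGroup (Fin n ⊕ Fin n))).lowerCentralSeries m) :
    φ n x ∈ (⊤ : Subgroup Heis).lowerCentralSeries m :=
  Subgroup.lowerCentralSeries.map (φ n) m ⟨x, hx, rfl⟩

/-- The `z`-coordinate of `φ`, which is a homomorphism on `γ₂(F)`. -/
def ζ : ((⊤ : Subgroup (FreeGroup (Fin n ⊕ Fin n))).lowerCentralSeries 1) →* Multiplicative ℤ where
  toFun x := Multiplicative.ofAdd ((φ n x.1).c)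
  map_one' := by simp
  map_mul' x y := by
    have hx := (Heis.ab_eq_zero (φ_mem n 1 x.2)).1
    show Multiplicative.ofAdd ((φ n (x.1 * y.1)).c) = _
    rw [map_mul, Heis.mul_c, hx, zero_mul, add_zero, ofAdd_add]

lemma ζ_ker :
    ((⊤ : Subgroup (FreeGroup (Fin n ⊕ Fin n))).lowerCentralSeries 2).subgroupOf
      ((⊤ : Subgroup (FreeGroup (Fin n ⊕ Fin n))).lowerCentralSeries 1) ≤ (ζ n).ker := by
  intro x hx
  have h2 : φ n x.1 ∈ (⊤ : Subgroup Heis).lowerCentralSeries 2 := φ_mem n 2 hx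
  rw [Heis.gamma3_eq_bot, Subgroup.mem_bot] at h2
  have : (φ n x.1).c = 0 := by rw [h2]; rfl
  rw [MonoidHom.mem_ker]
  show Multiplicative.ofAdd ((φ n x.1).c) = 1
  rw [this]
  rfl

/-- The detecting homomorphism on `γ₂(F)/γ₃(F)`. -/
def χ : (((⊤ : Subgroup (FreeGroup (Fin n ⊕ Fin n))).lowerCentralSeries 1) ⧸
    (((⊤ : Subgroup (FreeGroup (Fin n ⊕ Fin n))).lowerCentralSeries 2).subgroupOf
      ((⊤ : Subgroup (FreeGroup (Fin n ⊕ Fin n))).lowerCentralSeries 1))) →* Multiplicative ℤ :=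
  QuotientGroup.lift _ (ζ n) (ζ_ker n)

end SurfaceAux

/-- The surface relator `r = [x₁,y₁]⋯[xₙ,yₙ]` in the free group on `2n`
generators lies in `γ₂(F) = lowerCentralSeries F 1`, its image in the abelian
quotient `γ₂(F)/γ₃(F)` is non-trivial and not a proper power, and in
particular `r ∉ γ₃(F) = lowerCentralSeries F 2`. -/
theorem surface_relator_primitive (n : ℕ) (hn : 1 ≤ n)
    (r : FreeGroup (Fin n ⊕ Fin n))
    (hr : r = (List.ofFn (fun i : Fin n =>
      ⁅(FreeGroup.of (Sum.inl i) : FreeGroup (Fin n ⊕ Fin n)),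
        FreeGroup.of (Sum.inr i)⁆)).prod) :
    ∃ hmem : r ∈ (⊤ : Subgroup (FreeGroup (Fin n ⊕ Fin n))).lowerCentralSeries 1,
      ((QuotientGroup.mk (⟨r, hmem⟩ : (⊤ : Subgroup (FreeGroup (Fin n ⊕ Fin n))).lowerCentralSeries 1) :
          ((⊤ : Subgroup (FreeGroup (Fin n ⊕ Fin n))).lowerCentralSeries 1) ⧸
            (((⊤ : Subgroup (FreeGroup (Fin n ⊕ Fin n))).lowerCentralSeries 2).subgroupOf
              ((⊤ : Subgroup (FreeGroup (Fin n ⊕ Fin n))).lowerCentralSeries 1))) ≠ 1 ∧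
        (¬ ∃ (g : ((⊤ : Subgroup (FreeGroup (Fin n ⊕ Fin n))).lowerCentralSeries 1) ⧸
            (((⊤ : Subgroup (FreeGroup (Fin n ⊕ Fin n))).lowerCentralSeries 2).subgroupOf
              ((⊤ : Subgroup (FreeGroup (Fin n ⊕ Fin n))).lowerCentralSeries 1))) (k : ℤ),
          2 ≤ k ∧
            (QuotientGroup.mk (⟨r, hmem⟩ : (⊤ : Subgroup (FreeGroup (Fin n ⊕ Fin n))).lowerCentralSeries 1)) = g ^ k) ∧
        r ∉ (⊤ : Subgroup (FreeGroup (Fin n ⊕ Fin n))).lowerCentralSeries 2) := by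
  obtain ⟨m, rfl⟩ : ∃ m, n = m + 1 := ⟨n - 1, (Nat.succ_pred_eq_of_pos hn).symm⟩
  -- membership in γ₂
  have hmem : r ∈ (⊤ : Subgroup (FreeGroup (Fin (m + 1) ⊕ Fin (m + 1)))).lowerCentralSeries 1 := by
    rw [hr]
    refine Subgroup.list_prod_mem _ ?_
    intro x hx
    rw [List.mem_ofFn] at hx
    obtain ⟨i, rfl⟩ := hx
    rw [Subgroup.top_lowerCentralSeries_one, commutator_def]
    exact Subgroup.commutator_mem_commutator (Subgroup.mem_top _) (Subgroup.mem_top _)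
  have key : (SurfaceAux.φ (m + 1) r).c = 1 := by
      have hφ : SurfaceAux.φ (m + 1) r = ⟨0, 0, 1⟩ := by
        rw [hr, map_list_prod, List.map_ofFn, List.ofFn_succ]
        have h0 : (SurfaceAux.φ (m + 1)) ⁅(FreeGroup.of (Sum.inl (0 : Fin (m+1))) : FreeGroup (Fin (m + 1) ⊕ Fin (m + 1))),
            FreeGroup.of (Sum.inr 0)⁆ = ⟨0, 0, 1⟩ := by
          rw [commutatorElement_def]
          simp only [map_mul, map_inv, SurfaceAux.φ, FreeGroup.lift_apply_of]
          show SurfaceAux.f (m+1) (Sum.inl 0) * SurfaceAux.f (m+1) (Sum.inr 0) *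
            (SurfaceAux.f (m+1) (Sum.inl 0))⁻¹ * (SurfaceAux.f (m+1) (Sum.inr 0))⁻¹ = _
          simp [SurfaceAux.f]
          ext <;> simp
        have hrest : ∀ i : Fin m, (SurfaceAux.φ (m + 1)) ⁅(FreeGroup.of (Sum.inl i.succ) : FreeGroup (Fin (m + 1) ⊕ Fin (m + 1))),
            FreeGroup.of (Sum.inr i.succ)⁆ = 1 := by
          intro i
          rw [commutatorElement_def]
          simp only [map_mul, map_inv, SurfaceAux.φ, FreeGroup.lift_apply_of]
          show SurfaceAux.f (m+1) (Sum.inl i.succ) * SurfaceAux.f (m+1) (Sum.inr i.succ) *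
            (SurfaceAux.f (m+1) (Sum.inl i.succ))⁻¹ * (SurfaceAux.f (m+1) (Sum.inr i.succ))⁻¹ = 1
          simp [SurfaceAux.f, Fin.val_succ]
        simp only [Function.comp]
        rw [List.prod_cons, h0]
        have : (List.ofFn fun i : Fin m => (SurfaceAux.φ (m + 1))
            ⁅(FreeGroup.of (Sum.inl i.succ) : FreeGroup (Fin (m + 1) ⊕ Fin (m + 1))), FreeGroup.of (Sum.inr i.succ)⁆).prod = 1 := by
          apply List.prod_eq_one
          intro x hx
          rw [List.mem_ofFn] at hx
          obtain ⟨i, rfl⟩ := hx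
          exact hrest i
        rw [this, mul_one]
      rw [hφ]
  have hχr : SurfaceAux.χ (m + 1) (QuotientGroup.mk ⟨r, hmem⟩) = Multiplicative.ofAdd 1 := by
    show SurfaceAux.ζ (m + 1) ⟨r, hmem⟩ = _
    show Multiplicative.ofAdd ((SurfaceAux.φ (m + 1) r).c) = _
    rw [key]
  refine ⟨hmem, ?_, ?_, ?_⟩
  · -- nontriviality
    intro h1
    rw [h1, map_one] at hχr
    have h0 : (1 : ℤ) = 0 := congrArg Multiplicative.toAdd hχr.symm
    exact one_ne_zero h0
  · -- not a proper power
    rintro ⟨g, k, hk, hgk⟩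
    rw [hgk, map_zpow] at hχr
    have h1 : (1 : ℤ) = k * Multiplicative.toAdd (SurfaceAux.χ (m + 1) g) := by
      have := congrArg Multiplicative.toAdd hχr
      simpa [toAdd_zpow] using this.symm
    have hdvd : k ∣ 1 := ⟨_, h1⟩
    have := Int.le_of_dvd one_pos hdvd
    omega
  · -- r ∉ γ₃
    intro h3
    have h2 : SurfaceAux.φ (m + 1) r ∈ (⊤ : Subgroup Heis).lowerCentralSeries 2 := SurfaceAux.φ_mem _ 2 h3
    rw [Heis.gamma3_eq_bot, Subgroup.mem_bot] at h2
    rw [h2] at key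
    exact one_ne_zero key.symm
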